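/- In the constructed PO-ALLOCATION-ADDITIVE instance arising from a 3CNF formula φ, the allocation a is Pareto-optimal if and only if φ is unsatisfiable. -/

import Mathlib

/-- A literal over variables `x_1, …, x_w`: a variable together with a polarity
(`true` = positive literal, `false` = negative literal). -/
abbrev Lit (w : ℕ) := Fin w × Bool

/-- The agents of the PO-ALLOCATION-ADDITIVE instance built from a 3CNF formula:
an agent `a_set(l)` for each literal `l`, an agent `a_{c_i}` for each clause, and
the two agents `a_unassigned` and `a_satisfied`. -/
inductive AgentPO (w w' : ℕ) where
  | aset (l : Lit w)
  | ac (i : Fin w')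
  | aun
  | asat
deriving DecidableEq, Fintype

/-- The resources of the PO-ALLOCATION-ADDITIVE instance: a resource `o_{c_i,l}` for
each clause `c_i` and literal `l ∈ c_i`, a resource `o_{x}` for each variable, a
resource `o_{c_i}` for each clause, and the resource `o_satisfied`. -/
inductive ResPO (w w' : ℕ) (φ : Fin w' → Finset (Lit w)) where
  | olit (x : Σ i : Fin w', {l : Lit w // l ∈ φ i})
  | ovar (x : Fin w)
  | ocl (i : Fin w')
  | osat
deriving DecidableEq, Fintype

/-- The utility coefficients of the constructed PO-ALLOCATION-ADDITIVE instance. -/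
noncomputable def coeffPO (w w' : ℕ) (φ : Fin w' → Finset (Lit w)) :
    AgentPO w w' → ResPO w w' φ → ℝ
  | .aset l, .olit ⟨_, l'⟩ => if (l' : Lit w) = l then 1 else 0
  | .aset l, .ovar x =>
      -- `a_set(l)` values `o_{x}` by the number of occurrences of `l` in the formula
      if l.1 = x then ((Finset.univ.filter fun i => l ∈ φ i).card : ℝ) else 0
  | .ac i, .olit ⟨i', _⟩ => if i' = i then 1 else 0
  | .ac i, .ocl i' => if i' = i then 1 else 0
  | .aun, .ovar _ => 1
  | .aun, .osat => (w : ℝ) + 1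
  | .asat, .ocl _ => 1
  | .asat, .osat => (w' : ℝ)
  | _, _ => 0

/-- The allocation `a` of the constructed instance: each `o_{c_i,l}` goes to `a_set(l)`,
each `o_{x}` goes to `a_unassigned`, each `o_{c_i}` goes to `a_{c_i}`, and `o_satisfied`
goes to `a_satisfied`. (An allocation maps each resource to at most one agent, which
makes it automatically admissible.) -/
def allocPO (w w' : ℕ) (φ : Fin w' → Finset (Lit w)) :
    ResPO w w' φ → Option (AgentPO w w')
  | .olit ⟨_, l⟩ => some (.aset l.1)
  | .ovar _ => some .aun
  | .ocl i => some (.ac i)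
  | .osat => some .asat

/-- The additive utility of agent `A` under an allocation: the sum of `A`'s coefficients
over the resources allocated to `A`. -/
noncomputable def utilPO (w w' : ℕ) (φ : Fin w' → Finset (Lit w))
    (al : ResPO w w' φ → Option (AgentPO w w')) (A : AgentPO w w') : ℝ :=
  ∑ o : ResPO w w' φ, if al o = some A then coeffPO w w' φ A o else 0

/-- `a'` Pareto-dominates `a`: no agent's utility decreases, some agent's utility
strictly increases. -/
def DominatesPO (w w' : ℕ) (φ : Fin w' → Finset (Lit w))
    (a' a : ResPO w w' φ → Option (AgentPO w w')) : Prop :=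
  (∀ A, utilPO w w' φ a A ≤ utilPO w w' φ a' A) ∧
  ∃ A, utilPO w w' φ a A < utilPO w w' φ a' A

/-- An allocation is Pareto-optimal if no (admissible) allocation Pareto-dominates it. -/
def ParetoOptPO (w w' : ℕ) (φ : Fin w' → Finset (Lit w))
    (a : ResPO w w' φ → Option (AgentPO w w')) : Prop :=
  ¬ ∃ a' : ResPO w w' φ → Option (AgentPO w w'), DominatesPO w w' φ a' a

/-- Satisfiability of the 3CNF formula `φ`: some truth assignment makes at least one
literal of every clause true. -/
def SatisfiablePO (w w' : ℕ) (φ : Fin w' → Finset (Lit w)) : Prop :=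
  ∃ v : Fin w → Bool, ∀ i : Fin w', ∃ l ∈ φ i, v l.1 = l.2

section
variable (w w' : ℕ) (φ : Fin w' → Finset (Lit w))

def resEquivPO : ResPO w w' φ ≃ ((Σ i : Fin w', {l : Lit w // l ∈ φ i}) ⊕ (Fin w ⊕ (Fin w' ⊕ Unit))) where
  toFun
    | .olit p => .inl p
    | .ovar x => .inr (.inl x)
    | .ocl i => .inr (.inr (.inl i))
    | .osat => .inr (.inr (.inr ()))
  invFun
    | .inl p => .olit p
    | .inr (.inl x) => .ovar x
    | .inr (.inr (.inl i)) => .ocl i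
    | .inr (.inr (.inr _)) => .osat
  left_inv := by rintro (_|_|_|_) <;> rfl
  right_inv := by rintro (_|(_|(_|⟨⟩))) <;> rfl

lemma sumRes (g : ResPO w w' φ → ℝ) :
    ∑ o : ResPO w w' φ, g o =
      (∑ p : Σ i : Fin w', {l : Lit w // l ∈ φ i}, g (.olit p)) +
      ((∑ x : Fin w, g (.ovar x)) + ((∑ i : Fin w', g (.ocl i)) + g .osat)) := by
  rw [← (resEquivPO w w' φ).symm.sum_comp g]
  simp [Fintype.sum_sum_type, resEquivPO]

lemma util_split (al : ResPO w w' φ → Option (AgentPO w w')) (A : AgentPO w w') :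
    utilPO w w' φ al A =
      (∑ p : Σ i : Fin w', {l : Lit w // l ∈ φ i},
          if al (.olit p) = some A then coeffPO w w' φ A (.olit p) else 0) +
      ((∑ x : Fin w, if al (.ovar x) = some A then coeffPO w w' φ A (.ovar x) else 0) +
      ((∑ i : Fin w', if al (.ocl i) = some A then coeffPO w w' φ A (.ocl i) else 0) +
      (if al .osat = some A then coeffPO w w' φ A .osat else 0))) := by
  exact sumRes w w' φ _

noncomputable def occPO (l : Lit w) : ℝ := ((Finset.univ.filter fun i => l ∈ φ i).card : ℝ)

lemma sum_olit_ind (l : Lit w) :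
    ∑ p : Σ i : Fin w', {l' : Lit w // l' ∈ φ i}, (if (p.2 : Lit w) = l then (1:ℝ) else 0)
      = occPO w w' φ l := by
  rw [Finset.univ_sigma_univ.symm, Finset.sum_sigma]
  have h : ∀ i : Fin w', (∑ l' : {l' : Lit w // l' ∈ φ i}, if (l' : Lit w) = l then (1:ℝ) else 0)
      = if l ∈ φ i then 1 else 0 := by
    intro i
    rw [← Finset.sum_subtype (φ i) (fun _ => Iff.rfl) (fun x => if x = l then (1:ℝ) else 0)]
    exact Finset.sum_ite_eq' (φ i) l (fun _ => (1:ℝ))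
  simp only [h]
  rw [Finset.sum_boole]
  rfl
lemma ite_swapPO {A B : Prop} [Decidable A] [Decidable B] (c : ℝ) :
    (if A then (if B then c else 0) else 0) = if B ∧ A then c else 0 := by
  split_ifs with h1 h2 h3 h3 <;> simp_all

lemma util_aun (al : ResPO w w' φ → Option (AgentPO w w')) :
    utilPO w w' φ al .aun =
      (∑ x : Fin w, if al (.ovar x) = some .aun then (1:ℝ) else 0) +
      (if al .osat = some .aun then (w:ℝ) + 1 else 0) := by
  rw [util_split]
  simp [coeffPO]

lemma util_asat (al : ResPO w w' φ → Option (AgentPO w w')) :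
    utilPO w w' φ al .asat =
      (∑ i : Fin w', if al (.ocl i) = some .asat then (1:ℝ) else 0) +
      (if al .osat = some .asat then (w':ℝ) else 0) := by
  rw [util_split]
  simp [coeffPO]

lemma util_ac (al : ResPO w w' φ → Option (AgentPO w w')) (i : Fin w') :
    utilPO w w' φ al (.ac i) =
      (∑ p : Σ i : Fin w', {l : Lit w // l ∈ φ i},
          if p.1 = i ∧ al (.olit p) = some (.ac i) then (1:ℝ) else 0) +
      (if al (.ocl i) = some (.ac i) then (1:ℝ) else 0) := by
  rw [util_split]
  have h1 : ∀ p : Σ i : Fin w', {l : Lit w // l ∈ φ i},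
      (if al (.olit p) = some (.ac i) then coeffPO w w' φ (.ac i) (.olit p) else 0)
        = if p.1 = i ∧ al (.olit p) = some (.ac i) then (1:ℝ) else 0 := by
    rintro ⟨i', l'⟩
    show (if _ then (if i' = i then (1:ℝ) else 0) else 0) = _
    rw [ite_swapPO]
  have h2 : (∑ i' : Fin w', if al (.ocl i') = some (.ac i) then coeffPO w w' φ (.ac i) (.ocl i') else 0)
      = if al (.ocl i) = some (.ac i) then (1:ℝ) else 0 := by
    have : ∀ i' : Fin w', (if al (.ocl i') = some (.ac i) then coeffPO w w' φ (.ac i) (.ocl i') else 0)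
        = if i' = i then (if al (.ocl i') = some (.ac i) then (1:ℝ) else 0) else 0 := by
      intro i'
      show (if _ then (if i' = i then (1:ℝ) else 0) else 0) = _
      rw [ite_swapPO]
      split_ifs with h1 h2 h3 <;> simp_all
    simp only [this]
    rw [Finset.sum_ite_eq' Finset.univ i (fun i' => if al (.ocl i') = some (.ac i) then (1:ℝ) else 0)]
    simp
  simp only [h1, h2]
  simp [coeffPO]

lemma util_aset (al : ResPO w w' φ → Option (AgentPO w w')) (l : Lit w) :
    utilPO w w' φ al (.aset l) =
      (∑ p : Σ i : Fin w', {l' : Lit w // l' ∈ φ i},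
          if (p.2 : Lit w) = l ∧ al (.olit p) = some (.aset l) then (1:ℝ) else 0) +
      (if al (.ovar l.1) = some (.aset l) then occPO w w' φ l else 0) := by
  rw [util_split]
  have h1 : ∀ p : Σ i : Fin w', {l' : Lit w // l' ∈ φ i},
      (if al (.olit p) = some (.aset l) then coeffPO w w' φ (.aset l) (.olit p) else 0)
        = if (p.2 : Lit w) = l ∧ al (.olit p) = some (.aset l) then (1:ℝ) else 0 := by
    rintro ⟨i', l'⟩
    show (if _ then (if (l' : Lit w) = l then (1:ℝ) else 0) else 0) = _
    rw [ite_swapPO]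
  have h2 : (∑ x : Fin w, if al (.ovar x) = some (.aset l) then coeffPO w w' φ (.aset l) (.ovar x) else 0)
      = if al (.ovar l.1) = some (.aset l) then occPO w w' φ l else 0 := by
    have : ∀ x : Fin w, (if al (.ovar x) = some (.aset l) then coeffPO w w' φ (.aset l) (.ovar x) else 0)
        = if x = l.1 then (if al (.ovar x) = some (.aset l) then occPO w w' φ l else 0) else 0 := by
      intro x
      show (if al (.ovar x) = some (.aset l) then (if l.1 = x then (_ : ℝ) else 0) else 0) = _
      rw [ite_swapPO]
      split_ifs with h1 h2 h3 <;> simp_all [occPO, eq_comm]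
    simp only [this]
    rw [Finset.sum_ite_eq' Finset.univ l.1 (fun x => if al (.ovar x) = some (.aset l) then occPO w w' φ l else 0)]
    simp
  simp only [h1, h2]
  simp [coeffPO]
lemma occPO_nonneg (l : Lit w) : 0 ≤ occPO w w' φ l := Nat.cast_nonneg _

lemma occPO_pos {i : Fin w'} {l : Lit w} (h : l ∈ φ i) : 1 ≤ occPO w w' φ l := by
  unfold occPO
  have : i ∈ Finset.univ.filter fun j => l ∈ φ j := by simp [h]
  have := Finset.card_pos.mpr ⟨i, this⟩
  exact_mod_cast this

lemma util_a_aun : utilPO w w' φ (allocPO w w' φ) .aun = (w : ℝ) := by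
  rw [util_aun]; simp [allocPO]

lemma util_a_asat : utilPO w w' φ (allocPO w w' φ) .asat = (w' : ℝ) := by
  rw [util_asat]; simp [allocPO]

lemma util_a_ac (i : Fin w') : utilPO w w' φ (allocPO w w' φ) (.ac i) = 1 := by
  rw [util_ac]; simp [allocPO]

lemma util_a_aset (l : Lit w) :
    utilPO w w' φ (allocPO w w' φ) (.aset l) = occPO w w' φ l := by
  rw [util_aset]
  have : ∀ p : Σ i : Fin w', {l' : Lit w // l' ∈ φ i},
      (if (p.2 : Lit w) = l ∧ allocPO w w' φ (.olit p) = some (.aset l) then (1:ℝ) else 0)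
        = if (p.2 : Lit w) = l then (1:ℝ) else 0 := by
    rintro ⟨i', l'⟩
    simp only [allocPO]
    split_ifs with h1 h2 h3 <;> simp_all
  simp only [this, sum_olit_ind]
  simp [allocPO]

/-- indicator sums equal filter cards -/
lemma ind_sum_card {α : Type*} [Fintype α] (P : α → Prop) [DecidablePred P] :
    (∑ x : α, if P x then (1:ℝ) else 0) = ((Finset.univ.filter P).card : ℝ) := by
  rw [Finset.sum_boole]

lemma all_of_ind_sum {α : Type*} [Fintype α] (P : α → Prop) [DecidablePred P]
    (h : (Fintype.card α : ℝ) ≤ ∑ x : α, if P x then (1:ℝ) else 0) : ∀ x, P x := by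
  rw [ind_sum_card] at h
  have h2 : Fintype.card α ≤ (Finset.univ.filter P).card := by exact_mod_cast h
  have h3 : Finset.univ.filter P = Finset.univ :=
    Finset.eq_of_subset_of_card_le (Finset.filter_subset _ _) (by simpa [Finset.card_univ] using h2)
  intro x
  have hx : x ∈ Finset.univ.filter P := h3.symm ▸ Finset.mem_univ x
  exact (Finset.mem_filter.mp hx).2

lemma exists_of_ind_sum {α : Type*} [Fintype α] (P : α → Prop) [DecidablePred P]
    (h : (1:ℝ) ≤ ∑ x : α, if P x then (1:ℝ) else 0) : ∃ x, P x := by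
  rw [ind_sum_card] at h
  have h2 : 1 ≤ (Finset.univ.filter P).card := by exact_mod_cast h
  obtain ⟨x, hx⟩ := Finset.card_pos.mp h2
  exact ⟨x, (Finset.mem_filter.mp hx).2⟩

lemma ind_sum_le_card {α : Type*} [Fintype α] (P : α → Prop) [DecidablePred P] :
    (∑ x : α, if P x then (1:ℝ) else 0) ≤ (Fintype.card α : ℝ) := by
  rw [ind_sum_card]
  exact_mod_cast Finset.card_filter_le _ _
end

section
variable (w w' : ℕ) (φ : Fin w' → Finset (Lit w))
def domAllocPO (v : Fin w → Bool) (wit : Fin w' → Lit w) :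
    ResPO w w' φ → Option (AgentPO w w')
  | .olit ⟨i, l⟩ => if (l : Lit w) = wit i then some (.ac i) else some (.aset ↑l)
  | .ovar x => some (.aset (x, v x))
  | .ocl _ => some .asat
  | .osat => some .aun

lemma sat_not_po (hsat : ∃ v : Fin w → Bool, ∀ i : Fin w', ∃ l ∈ φ i, v l.1 = l.2) :
    ∃ a' : ResPO w w' φ → Option (AgentPO w w'), DominatesPO w w' φ a' (allocPO w w' φ) := by
  obtain ⟨v, hv⟩ := hsat
  have wmem : ∀ i, (hv i).choose ∈ φ i := fun i => (hv i).choose_spec.1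
  have wval : ∀ i, v ((hv i).choose).1 = ((hv i).choose).2 := fun i => (hv i).choose_spec.2
  set wit : Fin w' → Lit w := fun i => (hv i).choose with hwit
  refine ⟨domAllocPO w w' φ v wit, ?_, ⟨.aun, ?_⟩⟩
  · intro A
    match A with
    | .aun =>
        rw [util_a_aun, util_aun]
        have : domAllocPO w w' φ v wit .osat = some .aun := rfl
        rw [this]
        have h0 : (0:ℝ) ≤ ∑ x : Fin w, if domAllocPO w w' φ v wit (.ovar x) = some .aun then (1:ℝ) else 0 :=
          Finset.sum_nonneg fun x _ => by positivity
        rw [if_pos rfl]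
        linarith
    | .asat =>
        rw [util_a_asat, util_asat]
        have : ∀ i : Fin w', domAllocPO w w' φ v wit (.ocl i) = some .asat := fun i => rfl
        simp [this]
        positivity
    | .ac i =>
        rw [util_a_ac, util_ac]
        have key : (fun p : Σ j : Fin w', {l' : Lit w // l' ∈ φ j} =>
            if p.1 = i ∧ domAllocPO w w' φ v wit (.olit p) = some (.ac i) then (1:ℝ) else 0)
            (⟨i, ⟨wit i, wmem i⟩⟩) = 1 := by
          simp [domAllocPO]
        have h1' := Finset.single_le_sum
          (f := fun p : Σ j : Fin w', {l' : Lit w // l' ∈ φ j} =>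
            if p.1 = i ∧ domAllocPO w w' φ v wit (.olit p) = some (.ac i) then (1:ℝ) else 0)
          (fun p _ => by positivity) (Finset.mem_univ (⟨i, ⟨wit i, wmem i⟩⟩ : Σ j : Fin w', {l' : Lit w // l' ∈ φ j}))
        have h1 : (1:ℝ) ≤ ∑ p : Σ j : Fin w', {l' : Lit w // l' ∈ φ j},
            if p.1 = i ∧ domAllocPO w w' φ v wit (.olit p) = some (.ac i) then (1:ℝ) else 0 :=
          le_trans (le_of_eq key.symm) h1'
        have h2 : (0:ℝ) ≤ if domAllocPO w w' φ v wit (.ocl i) = some (.ac i) then (1:ℝ) else 0 := by positivity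
        linarith
    | .aset l =>
        rw [util_a_aset, util_aset]
        by_cases hl : v l.1 = l.2
        · have hov : domAllocPO w w' φ v wit (.ovar l.1) = some (.aset l) := by
            show some (AgentPO.aset (l.1, v l.1)) = some (AgentPO.aset l)
            rw [show ((l.1, v l.1) : Lit w) = l from by rw [hl]]
          rw [hov, if_pos rfl]
          have h0 : (0:ℝ) ≤ ∑ p : Σ j : Fin w', {l' : Lit w // l' ∈ φ j},
              if (p.2 : Lit w) = l ∧ domAllocPO w w' φ v wit (.olit p) = some (.aset l) then (1:ℝ) else 0 :=
            Finset.sum_nonneg fun p _ => by positivity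
          linarith
        · have hlw : ∀ j : Fin w', l ≠ wit j := by
            intro j hj
            exact hl (hj ▸ wval j)
          have : ∀ p : Σ j : Fin w', {l' : Lit w // l' ∈ φ j},
              (if (p.2 : Lit w) = l ∧ domAllocPO w w' φ v wit (.olit p) = some (.aset l) then (1:ℝ) else 0)
                = if (p.2 : Lit w) = l then (1:ℝ) else 0 := by
            rintro ⟨j, l'⟩
            by_cases h : (l' : Lit w) = l
            · have hne : (l' : Lit w) ≠ wit j := h ▸ hlw j
              have : domAllocPO w w' φ v wit (.olit ⟨j, l'⟩) = some (.aset ↑l') := by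
                show (if (l' : Lit w) = wit j then some (AgentPO.ac j) else some (AgentPO.aset ((l' : Lit w)))) = some (AgentPO.aset ((l' : Lit w)))
                rw [if_neg hne]
              rw [this, h]
              simp
            · simp [h]
          simp only [this, sum_olit_ind]
          have h2 : (0:ℝ) ≤ if domAllocPO w w' φ v wit (.ovar l.1) = some (.aset l) then occPO w w' φ l else 0 := by
            split_ifs
            · exact occPO_nonneg w w' φ l
            · exact le_refl 0
          linarith
  · rw [util_a_aun, util_aun]
    have : domAllocPO w w' φ v wit .osat = some .aun := rfl
    rw [this, if_pos rfl]
    have h0 : (0:ℝ) ≤ ∑ x : Fin w, if domAllocPO w w' φ v wit (.ovar x) = some .aun then (1:ℝ) else 0 :=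
      Finset.sum_nonneg fun x _ => by positivity
    linarith

lemma dominated_sat
    (h : ∃ a' : ResPO w w' φ → Option (AgentPO w w'), DominatesPO w w' φ a' (allocPO w w' φ)) :
    ∃ v : Fin w → Bool, ∀ i : Fin w', ∃ l ∈ φ i, v l.1 = l.2 := by
  obtain ⟨a', hle, A₀, hlt⟩ := h
  by_cases hosat : a' .osat = some .aun
  · -- Case B: a_un got o_sat; extract a satisfying assignment
    -- all clause-resources o_{c_i} go to a_sat
    have hsat0 : a' .osat ≠ some .asat := by rw [hosat]; simp
    have h1 := hle .asat
    rw [util_a_asat, util_asat, if_neg hsat0, add_zero] at h1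
    have hocl : ∀ i : Fin w', a' (.ocl i) = some .asat :=
      all_of_ind_sum _ (by simpa using h1)
    -- each a_{c_i} gets some o_{c_i, l}
    have hwit : ∀ i : Fin w', ∃ p : Σ j : Fin w', {l : Lit w // l ∈ φ j},
        p.1 = i ∧ a' (.olit p) = some (.ac i) := by
      intro i
      have h2 := hle (.ac i)
      rw [util_a_ac, util_ac, if_neg (by rw [hocl i]; simp), add_zero] at h2
      exact exists_of_ind_sum _ h2
    -- each chosen literal's a_set agent must get the variable resource
    have hvar : ∀ i : Fin w', ∀ p : Σ j : Fin w', {l : Lit w // l ∈ φ j},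
        p.1 = i → a' (.olit p) = some (.ac i) →
        a' (.ovar (p.2 : Lit w).1) = some (.aset (p.2 : Lit w)) := by
      rintro i p hp1 hp2
      by_contra hvne
      set l : Lit w := (p.2 : Lit w) with hl
      have h3 := hle (.aset l)
      rw [util_a_aset, util_aset, if_neg hvne, add_zero] at h3
      set f : (Σ j : Fin w', {l' : Lit w // l' ∈ φ j}) → ℝ :=
        fun q => if (q.2 : Lit w) = l ∧ a' (.olit q) = some (.aset l) then (1:ℝ) else 0 with hf
      set g : (Σ j : Fin w', {l' : Lit w // l' ∈ φ j}) → ℝ :=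
        fun q => if (q.2 : Lit w) = l then (1:ℝ) else 0 with hg
      have hfp : f p = 0 := by
        rw [hf]
        simp only
        rw [if_neg]
        rintro ⟨-, h⟩
        rw [hp2] at h
        simp at h
      have hgp : g p = 1 := by simp [hg, hl]
      have hsumf : ∑ q, f q = ∑ q ∈ Finset.univ.erase p, f q + f p :=
        (Finset.sum_erase_add _ _ (Finset.mem_univ p)).symm
      have hsumg : ∑ q, g q = ∑ q ∈ Finset.univ.erase p, g q + g p :=
        (Finset.sum_erase_add _ _ (Finset.mem_univ p)).symm
      have hfg : ∀ q ∈ Finset.univ.erase p, f q ≤ g q := by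
        intro q _
        rw [hf, hg]
        simp only
        split_ifs with h1 h2 <;> first | exact absurd h1.1 h2 | norm_num
      have hgocc : ∑ q, g q = occPO w w' φ l := sum_olit_ind w w' φ l
      have hocc1 : 1 ≤ occPO w w' φ l := occPO_pos w w' φ (p.2.2)
      have := Finset.sum_le_sum hfg
      linarith
    -- define the assignment
    refine ⟨fun x => decide (a' (.ovar x) = some (.aset (x, true))), ?_⟩
    intro i
    obtain ⟨p, hp1, hp2⟩ := hwit i
    have hmem : (p.2 : Lit w) ∈ φ i := hp1 ▸ p.2.2
    refine ⟨(p.2 : Lit w), hmem, ?_⟩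
    have hv := hvar i p hp1 hp2
    set l : Lit w := (p.2 : Lit w) with hl
    cases hb : l.2 with
    | false =>
      rw [decide_eq_false_iff_not]
      intro hcon
      rw [hv] at hcon
      have h3 := Option.some.inj hcon
      have h2 : l = (l.1, true) := by injection h3
      have h4 := congrArg Prod.snd h2
      rw [hb] at h4
      simp at h4
    | true =>
      rw [decide_eq_true_eq]
      have h2 : ((l.1, true) : Lit w) = l := by rw [← hb]
      rw [h2]
      exact hv
  · -- Case A: a_un did not get o_sat; derive a contradiction
    exfalso
    have h1 := hle .aun
    rw [util_a_aun, util_aun, if_neg hosat, add_zero] at h1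
    have hovar : ∀ x : Fin w, a' (.ovar x) = some .aun :=
      all_of_ind_sum _ (by simpa using h1)
    have holit : ∀ p : Σ j : Fin w', {l : Lit w // l ∈ φ j},
        a' (.olit p) = some (.aset (p.2 : Lit w)) := by
      have key : ∀ l : Lit w, ∀ p : Σ j : Fin w', {l' : Lit w // l' ∈ φ j},
          (p.2 : Lit w) = l → a' (.olit p) = some (.aset l) := by
        intro l
        have h2 := hle (.aset l)
        rw [util_a_aset, util_aset, if_neg (by rw [hovar l.1]; simp), add_zero] at h2
        set f : (Σ j : Fin w', {l' : Lit w // l' ∈ φ j}) → ℝ :=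
          fun q => if (q.2 : Lit w) = l ∧ a' (.olit q) = some (.aset l) then (1:ℝ) else 0 with hf
        set g : (Σ j : Fin w', {l' : Lit w // l' ∈ φ j}) → ℝ :=
          fun q => if (q.2 : Lit w) = l then (1:ℝ) else 0 with hg
        have hfg : ∀ q ∈ Finset.univ, f q ≤ g q := by
          intro q _
          rw [hf, hg]; simp only
          split_ifs with h1 h2 <;> first | exact absurd h1.1 h2 | norm_num
        have hgocc : ∑ q, g q = occPO w w' φ l := sum_olit_ind w w' φ l
        have heq : ∑ q, f q = ∑ q, g q := le_antisymm (Finset.sum_le_sum hfg) (by linarith)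
        have hpt := (Finset.sum_eq_sum_iff_of_le hfg).mp heq
        intro p hp
        by_contra hcon
        have h5 := hpt p (Finset.mem_univ p)
        rw [hf, hg] at h5
        simp only at h5
        rw [if_pos hp, if_neg (fun hc => hcon hc.2)] at h5
        norm_num at h5
      intro p
      exact key (p.2 : Lit w) p rfl
    have hocl : ∀ i : Fin w', a' (.ocl i) = some (.ac i) := by
      intro i
      have h2 := hle (.ac i)
      rw [util_a_ac, util_ac] at h2
      have hz : ∑ p : Σ j : Fin w', {l : Lit w // l ∈ φ j},
          (if p.1 = i ∧ a' (.olit p) = some (.ac i) then (1:ℝ) else 0) = 0 := by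
        apply Finset.sum_eq_zero
        intro p _
        rw [if_neg]
        rintro ⟨-, hc⟩
        rw [holit p] at hc
        simp at hc
      rw [hz, zero_add] at h2
      by_contra hcon
      rw [if_neg hcon] at h2
      norm_num at h2
    -- now show no agent strictly improves
    rcases A₀ with l | i | _ | _
    · rw [util_a_aset, util_aset, if_neg (by rw [hovar l.1]; simp), add_zero] at hlt
      have : ∀ q : Σ j : Fin w', {l' : Lit w // l' ∈ φ j},
          (if (q.2 : Lit w) = l ∧ a' (.olit q) = some (.aset l) then (1:ℝ) else 0)
            = if (q.2 : Lit w) = l then (1:ℝ) else 0 := by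
        intro q
        by_cases hq : (q.2 : Lit w) = l
        · rw [if_pos ⟨hq, hq ▸ holit q⟩, if_pos hq]
        · rw [if_neg (fun hc => hq hc.1), if_neg hq]
      rw [Finset.sum_congr rfl (fun q _ => this q), sum_olit_ind] at hlt
      exact lt_irrefl _ hlt
    · rw [util_a_ac, util_ac, if_pos (hocl i)] at hlt
      have hz : ∑ p : Σ j : Fin w', {l : Lit w // l ∈ φ j},
          (if p.1 = i ∧ a' (.olit p) = some (.ac i) then (1:ℝ) else 0) = 0 := by
        apply Finset.sum_eq_zero
        intro p _
        rw [if_neg]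
        rintro ⟨-, hc⟩
        rw [holit p] at hc
        simp at hc
      rw [hz, zero_add] at hlt
      exact lt_irrefl _ hlt
    · rw [util_a_aun, util_aun, if_neg hosat, add_zero] at hlt
      have : ∀ x : Fin w, (if a' (.ovar x) = some .aun then (1:ℝ) else 0) = 1 := by
        intro x; rw [if_pos (hovar x)]
      rw [Finset.sum_congr rfl (fun x _ => this x)] at hlt
      simp at hlt
    · rw [util_a_asat, util_asat] at hlt
      have hz : ∑ i : Fin w', (if a' (.ocl i) = some .asat then (1:ℝ) else 0) = 0 := by
        apply Finset.sum_eq_zero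
        intro i _
        rw [if_neg (by rw [hocl i]; simp)]
      rw [hz, zero_add] at hlt
      have : (if a' .osat = some .asat then (w':ℝ) else 0) ≤ (w':ℝ) := by
        split_ifs
        · exact le_refl _
        · positivity
      linarith

end

/-- The allocation `a` of the constructed PO-ALLOCATION-ADDITIVE instance is
Pareto-optimal if and only if the 3CNF formula `φ` is unsatisfiable. -/
theorem allocPO_paretoOptimal_iff_unsatisfiable (w w' : ℕ)
    (φ : Fin w' → Finset (Lit w)) (hφ : ∀ i, (φ i).card ≤ 3) :
    ParetoOptPO w w' φ (allocPO w w' φ) ↔ ¬ SatisfiablePO w w' φ := by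
  constructor
  · intro hpo hsat
    exact hpo (sat_not_po w w' φ hsat)
  · intro hunsat hdom
    exact hunsat (dominated_sat w w' φ hdom)
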